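/- Let K ⊂ ℝ^N be a convex body containing the origin in its interior, let G ⊂ ℝ^N be a bounded measurable set with positive Lebesgue measure which is uniformly K-dense, and let φ : [0, ∞) → [0, ∞) be of the form φ(t) = μ([0, t)) for a locally finite Borel measure μ, with φ convex and strictly increasing. Then there exists s > 0 such that the open sublevel set A = {x ∈ ℝ^N : f^φ(x) < s} of the function f^φ(x) = ∫_G φ(‖y − x‖_K) dy satisfies A ⊆ G ⊆ Ā and ∂G = ∂A = {x : f^φ(x) = s} ∩ Ā. -/

import Mathlib

open MeasureTheory Set Pointwise
open scoped ENNReal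


open Metric Bornology Filter
open scoped Topology

variable {E : Type*} [NormedAddCommGroup E] [NormedSpace ℝ E]

theorem gauge_pack {K : Set E} (hK_conv : Convex ℝ K) (hK_cl : IsClosed K)
    (hK_bdd : IsBounded K) (hK0 : (0 : E) ∈ interior K) :
    Continuous (gauge K) ∧ (∃ c C : ℝ, 0 < c ∧ 0 < C ∧
        (∀ u, c * ‖u‖ ≤ gauge K u) ∧ (∀ u, gauge K u ≤ C * ‖u‖)) ∧
      (∀ r : ℝ, 0 < r → ∀ y : E, y ∈ r • K ↔ gauge K y ≤ r) := by
  have hnhds : K ∈ nhds (0 : E) := mem_interior_iff_mem_nhds.1 hK0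
  have habs : Absorbent ℝ K := absorbent_nhds_zero hnhds
  obtain ⟨ε, hε, hball⟩ := Metric.mem_nhds_iff.1 hnhds
  obtain ⟨R, hR, hsub⟩ : ∃ R : ℝ, 0 < R ∧ K ⊆ closedBall 0 R := by
    obtain ⟨R, hsub⟩ := hK_bdd.subset_closedBall (0 : E)
    exact ⟨max R 1, lt_of_lt_of_le one_pos (le_max_right _ _),
      hsub.trans (closedBall_subset_closedBall (le_max_left _ _))⟩
  refine ⟨continuous_gauge hK_conv hnhds, ⟨R⁻¹, ε⁻¹, by positivity, by positivity, ?_, ?_⟩, ?_⟩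
  · intro u
    have := le_gauge_of_subset_closedBall (s := K) habs hR.le hsub (x := u)
    rw [div_eq_inv_mul] at this
    exact this
  · intro u
    have h1 : gauge K u ≤ gauge (ball (0:E) ε) u := gauge_mono (absorbent_ball_zero hε) hball u
    rw [gauge_ball hε.le, div_eq_inv_mul] at h1
    exact h1
  · intro r hr y
    constructor
    · intro hy; exact gauge_le_of_mem hr.le hy
    · intro hy
      have h1 : gauge K (r⁻¹ • y) ≤ 1 := by
        rw [gauge_smul_of_nonneg (by positivity)]
        rw [smul_eq_mul]
        calc r⁻¹ * gauge K y ≤ r⁻¹ * r := by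
              exact mul_le_mul_of_nonneg_left hy (by positivity)
          _ = 1 := inv_mul_cancel₀ hr.ne'
      have : r⁻¹ • y ∈ closure K := mem_closure_of_gauge_le_one hK_conv
        (interior_subset hK0) habs h1
      rw [hK_cl.closure_eq] at this
      exact ⟨r⁻¹ • y, this, by simp [smul_smul, mul_inv_cancel₀ hr.ne']⟩

theorem phi_pack (μ : Measure ℝ) [IsLocallyFiniteMeasure μ]
    (φ : ℝ → ℝ) (hφ_def : ∀ t, φ t = (μ (Set.Ico 0 t)).toReal) :
    Monotone φ ∧ Measurable φ ∧ φ 0 = 0 ∧ ∀ t, 0 ≤ φ t := by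
  have hfin : ∀ t : ℝ, μ (Set.Ico 0 t) < ∞ := fun t =>
    lt_of_le_of_lt (measure_mono (Set.Ico_subset_Icc_self.trans
      (Set.Icc_subset_Icc_right (le_max_left _ _))))
      (isCompact_Icc (a := (0:ℝ)) (b := max t 0)).measure_lt_top
  have hmono : Monotone φ := by
    intro t t' h
    rw [hφ_def, hφ_def]
    exact ENNReal.toReal_mono (hfin t').ne (measure_mono (Set.Ico_subset_Ico_right h))
  exact ⟨hmono, hmono.measurable, by simp [hφ_def], fun t => by rw [hφ_def]; positivity⟩

theorem F_const {N : ℕ} {K G : Set (EuclideanSpace ℝ (Fin N))}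
    (hK_conv : Convex ℝ K) (hK_comp : IsCompact K)
    (hK0 : (0 : EuclideanSpace ℝ (Fin N)) ∈ interior K)
    (hG_meas : MeasurableSet G) (hG_bdd : IsBounded G) (hG_pos : 0 < volume G)
    (hdense : ∀ r : ℝ, 0 < r → ∀ x ∈ frontier G, ∀ y ∈ frontier G,
      volume (G ∩ (x +ᵥ r • K)) = volume (G ∩ (y +ᵥ r • K)))
    (μ : Measure ℝ) [IsLocallyFiniteMeasure μ]
    (φ : ℝ → ℝ) (hφ_def : ∀ t, φ t = (μ (Set.Ico 0 t)).toReal)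
    {x x' : EuclideanSpace ℝ (Fin N)} (hx : x ∈ frontier G) (hx' : x' ∈ frontier G) :
    ∫ y in G, φ (gauge K (y - x)) = ∫ y in G, φ (gauge K (y - x')) := by
  haveI : Nontrivial (EuclideanSpace ℝ (Fin N)) := by
    by_contra h
    rw [not_nontrivial_iff_subsingleton] at h
    rcases G.eq_empty_or_nonempty with hG | hG
    · rw [hG] at hG_pos; simp at hG_pos
    · rw [hG.eq_univ, frontier_univ] at hx
      exact hx
  haveI : NullSingletonClass (volume : Measure (EuclideanSpace ℝ (Fin N))) := by infer_instance
  have hnhds : K ∈ nhds (0 : EuclideanSpace ℝ (Fin N)) := mem_interior_iff_mem_nhds.1 hK0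
  have habs : Absorbent ℝ K := absorbent_nhds_zero hnhds
  have hgauge_cont : Continuous (gauge K) := continuous_gauge hK_conv hnhds
  have hmem_smul : ∀ r : ℝ, 0 < r → ∀ y : EuclideanSpace ℝ (Fin N),
      y ∈ r • K ↔ gauge K y ≤ r := by
    intro r hr y
    constructor
    · intro hy; exact gauge_le_of_mem hr.le hy
    · intro hy
      have h1 : gauge K (r⁻¹ • y) ≤ 1 := by
        rw [gauge_smul_of_nonneg (by positivity), smul_eq_mul]
        calc r⁻¹ * gauge K y ≤ r⁻¹ * r := mul_le_mul_of_nonneg_left hy (by positivity)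
          _ = 1 := inv_mul_cancel₀ hr.ne'
      have : r⁻¹ • y ∈ closure K := mem_closure_of_gauge_le_one hK_conv
        (interior_subset hK0) habs h1
      rw [hK_comp.isClosed.closure_eq] at this
      exact ⟨r⁻¹ • y, this, by simp [smul_smul, mul_inv_cancel₀ hr.ne']⟩
  have hgauge_pos : ∀ u : EuclideanSpace ℝ (Fin N), u ≠ 0 → 0 < gauge K u := fun u hu =>
    (gauge_pos habs ((NormedSpace.isVonNBounded_iff ℝ).2 hK_comp.isBounded)).2 hu
  have hfin : ∀ t : ℝ, μ (Set.Ico 0 t) < ∞ := fun t =>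
    lt_of_le_of_lt (measure_mono (Set.Ico_subset_Icc_self.trans
      (Set.Icc_subset_Icc_right (le_max_left _ _))))
      (isCompact_Icc (a := (0:ℝ)) (b := max t 0)).measure_lt_top
  have hmble_g : ∀ z : EuclideanSpace ℝ (Fin N), Measurable fun y => gauge K (y - z) := fun z =>
    (hgauge_cont.comp (continuous_id.sub continuous_const)).measurable
  have hμmble : Measurable fun t : ℝ => μ (Set.Ico 0 t) := by
    have : Monotone fun t : ℝ => μ (Set.Ico 0 t) := fun a b hab =>
      measure_mono (Set.Ico_subset_Ico_right hab)
    exact this.measurable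
  have key : ∀ z : EuclideanSpace ℝ (Fin N), (∫ y in G, φ (gauge K (y - z)))
      = (∫⁻ t, (volume.restrict G)
          {y : EuclideanSpace ℝ (Fin N) | 0 ≤ t ∧ t < gauge K (y - z)} ∂μ).toReal := by
    intro z
    have h1 : (∫ y in G, φ (gauge K (y - z)))
        = (∫⁻ y in G, μ (Set.Ico 0 (gauge K (y - z))) ∂volume).toReal := by
      simp only [hφ_def]
      refine integral_toReal ((hμmble.comp (hmble_g z)).aemeasurable) ?_
      exact Filter.Eventually.of_forall fun y => hfin _
    rw [h1]
    congr 1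
    have hS : MeasurableSet {p : EuclideanSpace ℝ (Fin N) × ℝ | 0 ≤ p.2 ∧ p.2 < gauge K (p.1 - z)} := by
      refine MeasurableSet.inter ?_ ?_
      · exact measurableSet_le measurable_const measurable_snd
      · exact measurableSet_lt measurable_snd ((hmble_g z).comp measurable_fst)
    have hsec : ∀ t : ℝ, MeasurableSet {y : EuclideanSpace ℝ (Fin N) | 0 ≤ t ∧ t < gauge K (y - z)} := by
      intro t
      by_cases ht : 0 ≤ t
      · simp only [ht, true_and]
        exact measurableSet_lt measurable_const (hmble_g z)
      · have : {y : EuclideanSpace ℝ (Fin N) | 0 ≤ t ∧ t < gauge K (y - z)} = ∅ := by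
          ext y; simp [ht]
        rw [this]; exact MeasurableSet.empty
    have ind1 : ∀ (y : EuclideanSpace ℝ (Fin N)) (t : ℝ),
        ({p : EuclideanSpace ℝ (Fin N) × ℝ | 0 ≤ p.2 ∧ p.2 < gauge K (p.1 - z)}.indicator
          (1 : EuclideanSpace ℝ (Fin N) × ℝ → ℝ≥0∞) (y, t))
        = (Set.Ico 0 (gauge K (y - z))).indicator (1 : ℝ → ℝ≥0∞) t := by
      intro y t
      simp only [Set.indicator_apply, Set.mem_setOf_eq, Set.mem_Ico, Pi.one_apply]
    have ind2 : ∀ (t : ℝ) (y : EuclideanSpace ℝ (Fin N)),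
        ({p : EuclideanSpace ℝ (Fin N) × ℝ | 0 ≤ p.2 ∧ p.2 < gauge K (p.1 - z)}.indicator
          (1 : EuclideanSpace ℝ (Fin N) × ℝ → ℝ≥0∞) (y, t))
        = ({y : EuclideanSpace ℝ (Fin N) | 0 ≤ t ∧ t < gauge K (y - z)}.indicator
          (1 : EuclideanSpace ℝ (Fin N) → ℝ≥0∞) y) := by
      intro t y
      simp only [Set.indicator_apply, Set.mem_setOf_eq, Pi.one_apply]
    calc ∫⁻ y in G, μ (Set.Ico 0 (gauge K (y - z))) ∂volume
        = ∫⁻ y in G, ∫⁻ t, ({p : EuclideanSpace ℝ (Fin N) × ℝ | 0 ≤ p.2 ∧ p.2 < gauge K (p.1 - z)}.indicator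
            (1 : EuclideanSpace ℝ (Fin N) × ℝ → ℝ≥0∞) (y, t)) ∂μ ∂volume := by
          refine lintegral_congr fun y => ?_
          rw [lintegral_congr (ind1 y), lintegral_indicator_one measurableSet_Ico]
    _ = ∫⁻ t, ∫⁻ y in G, ({p : EuclideanSpace ℝ (Fin N) × ℝ | 0 ≤ p.2 ∧ p.2 < gauge K (p.1 - z)}.indicator
            (1 : EuclideanSpace ℝ (Fin N) × ℝ → ℝ≥0∞) (y, t)) ∂volume ∂μ :=
          lintegral_lintegral_swap ((measurable_one.indicator hS).aemeasurable)
    _ = ∫⁻ t, (volume.restrict G)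
          {y : EuclideanSpace ℝ (Fin N) | 0 ≤ t ∧ t < gauge K (y - z)} ∂μ := by
          refine lintegral_congr fun t => ?_
          rw [lintegral_congr (ind2 t), lintegral_indicator_one (hsec t)]
  rw [key x, key x']
  congr 1
  refine lintegral_congr fun t => ?_
  by_cases ht : 0 ≤ t
  · have hGfin : (volume.restrict G) Set.univ < ∞ := by
      rw [Measure.restrict_apply_univ]; exact hG_bdd.measure_lt_top
    have hslice : ∀ z : EuclideanSpace ℝ (Fin N), (volume.restrict G)
        {y : EuclideanSpace ℝ (Fin N) | 0 ≤ t ∧ t < gauge K (y - z)}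
        = (volume.restrict G) Set.univ - volume (G ∩ (z +ᵥ t • K)) := by
      intro z
      have hsetc : {y : EuclideanSpace ℝ (Fin N) | 0 ≤ t ∧ t < gauge K (y - z)}
          = {y : EuclideanSpace ℝ (Fin N) | gauge K (y - z) ≤ t}ᶜ := by
        ext y; simp only [Set.mem_setOf_eq, Set.mem_compl_iff, not_le, ht, true_and]
      have hmble_le : MeasurableSet {y : EuclideanSpace ℝ (Fin N) | gauge K (y - z) ≤ t} :=
        measurableSet_le (hmble_g z) measurable_const
      rw [hsetc, measure_compl hmble_le ((measure_mono (Set.subset_univ _)).trans_lt hGfin).ne]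
      congr 1
      rw [Measure.restrict_apply hmble_le]
      rcases eq_or_lt_of_le ht with ht0 | ht0
      · have h0 : {y : EuclideanSpace ℝ (Fin N) | gauge K (y - z) ≤ t} ⊆ {z} := by
          intro y hy
          simp only [Set.mem_setOf_eq, ← ht0] at hy
          have : ¬ (y - z ≠ 0) := fun h => absurd hy (not_le.2 (hgauge_pos _ h))
          simp only [not_not, sub_eq_zero] at this
          simp [this]
        have h1 : volume ({y : EuclideanSpace ℝ (Fin N) | gauge K (y - z) ≤ t} ∩ G) = 0 :=
          measure_mono_null (Set.inter_subset_left.trans h0) (by simp)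
        have h2 : volume (G ∩ (z +ᵥ t • K)) = 0 := by
          rw [← ht0]
          have hK0' : (0:ℝ) • K = {(0 : EuclideanSpace ℝ (Fin N))} := by
            rw [Set.zero_smul_set ⟨0, interior_subset hK0⟩]; rfl
          rw [hK0']
          refine measure_mono_null (fun y hy => ?_) (measure_singleton z)
          rcases hy.2 with ⟨w, hw, rfl⟩
          simp_all
        rw [h1, h2]
      · have hset : {y : EuclideanSpace ℝ (Fin N) | gauge K (y - z) ≤ t} = z +ᵥ t • K := by
          ext y
          rw [Set.mem_vadd_set_iff_neg_vadd_mem]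
          simp only [Set.mem_setOf_eq, vadd_eq_add, neg_add_eq_sub]
          rw [hmem_smul t ht0 (y - z)]
        rw [hset, Set.inter_comm]
    have hvol : volume (G ∩ (x +ᵥ t • K)) = volume (G ∩ (x' +ᵥ t • K)) := by
      rcases eq_or_lt_of_le ht with ht0 | ht0
      · have hK0' : (0:ℝ) • K = {(0 : EuclideanSpace ℝ (Fin N))} := by
          rw [Set.zero_smul_set ⟨0, interior_subset hK0⟩]; rfl
        have hz : ∀ z : EuclideanSpace ℝ (Fin N), volume (G ∩ (z +ᵥ t • K)) = 0 := by
          intro z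
          rw [← ht0, hK0']
          refine measure_mono_null (fun y hy => ?_) (measure_singleton z)
          rcases hy.2 with ⟨w, hw, rfl⟩
          simp_all
        rw [hz x, hz x']
      · exact hdense t ht0 x hx x' hx'
    rw [hslice x, hslice x', hvol]
  · have h0 : ∀ z : EuclideanSpace ℝ (Fin N),
        {y : EuclideanSpace ℝ (Fin N) | 0 ≤ t ∧ t < gauge K (y - z)} = ∅ := by
      intro z; ext y; simp [ht]
    rw [h0 x, h0 x']

section
variable {N : ℕ} {K G : Set (EuclideanSpace ℝ (Fin N))}

theorem F_integrable
    (hgauge_cont : Continuous (gauge K))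
    {C : ℝ} (hCpos : 0 ≤ C) (hC : ∀ u : EuclideanSpace ℝ (Fin N), gauge K u ≤ C * ‖u‖)
    (hG_meas : MeasurableSet G) (hG_bdd : IsBounded G)
    {φ : ℝ → ℝ} (hφ_mono : Monotone φ) (hφ_nonneg : ∀ t, 0 ≤ φ t)
    (x : EuclideanSpace ℝ (Fin N)) :
    IntegrableOn (fun y => φ (gauge K (y - x))) G volume := by
  obtain ⟨R, hR⟩ := hG_bdd.subset_closedBall 0
  refine Measure.integrableOn_of_bounded (M := φ (C * (R + ‖x‖))) hG_bdd.measure_lt_top.ne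
    ((hφ_mono.measurable.comp
      (hgauge_cont.comp (continuous_id.sub continuous_const)).measurable).aestronglyMeasurable) ?_
  refine (ae_restrict_iff' hG_meas).2 (Filter.Eventually.of_forall fun y hy => ?_)
  rw [Real.norm_eq_abs, abs_of_nonneg (hφ_nonneg _)]
  refine hφ_mono ((hC _).trans ?_)
  have h1 : ‖y - x‖ ≤ R + ‖x‖ := by
    have := hR hy
    simp only [mem_closedBall, dist_zero_right] at this
    calc ‖y - x‖ ≤ ‖y‖ + ‖x‖ := norm_sub_le _ _
      _ ≤ R + ‖x‖ := by linarith
  exact mul_le_mul_of_nonneg_left h1 hCpos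

theorem F_convexOn
    (hK_conv : Convex ℝ K) (habs : Absorbent ℝ K)
    (hgauge_cont : Continuous (gauge K))
    {C : ℝ} (hCpos : 0 ≤ C) (hC : ∀ u : EuclideanSpace ℝ (Fin N), gauge K u ≤ C * ‖u‖)
    (hG_meas : MeasurableSet G) (hG_bdd : IsBounded G)
    {φ : ℝ → ℝ} (hφ_mono : Monotone φ) (hφ_nonneg : ∀ t, 0 ≤ φ t)
    (hφ_conv : ConvexOn ℝ (Set.Ici (0 : ℝ)) φ) :
    ConvexOn ℝ Set.univ (fun x => ∫ y in G, φ (gauge K (y - x))) := by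
  refine ⟨convex_univ, fun x _ x' _ p q hp hq hpq => ?_⟩
  have hint := fun z => F_integrable hgauge_cont hCpos hC hG_meas hG_bdd hφ_mono hφ_nonneg z
  have hptwise : ∀ y : EuclideanSpace ℝ (Fin N),
      φ (gauge K (y - (p • x + q • x'))) ≤ p * φ (gauge K (y - x)) + q * φ (gauge K (y - x')) := by
    intro y
    have hdecomp : y - (p • x + q • x') = p • (y - x) + q • (y - x') := by
      have h1 : (p + q) • y = y := by rw [hpq, one_smul]
      rw [smul_sub, smul_sub]
      rw [show p • y - p • x + (q • y - q • x') = (p + q) • y - (p • x + q • x') by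
        rw [add_smul]; abel]
      rw [h1]
    have hg : gauge K (y - (p • x + q • x')) ≤ p * gauge K (y - x) + q * gauge K (y - x') := by
      rw [hdecomp]
      calc gauge K (p • (y - x) + q • (y - x'))
          ≤ gauge K (p • (y - x)) + gauge K (q • (y - x')) := gauge_add_le hK_conv habs _ _
        _ = p * gauge K (y - x) + q * gauge K (y - x') := by
            rw [gauge_smul_of_nonneg hp, gauge_smul_of_nonneg hq, smul_eq_mul, smul_eq_mul]
    have h2 : φ (p • gauge K (y - x) + q • gauge K (y - x'))
        ≤ p • φ (gauge K (y - x)) + q • φ (gauge K (y - x')) :=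
      hφ_conv.2 (Set.mem_Ici.2 (gauge_nonneg (y - x)))
        (Set.mem_Ici.2 (gauge_nonneg (y - x'))) hp hq hpq
    simp only [smul_eq_mul] at h2
    exact (hφ_mono hg).trans h2
  have hintsum : IntegrableOn (fun y => p * φ (gauge K (y - x)) + q * φ (gauge K (y - x'))) G
      volume := ((hint x).const_mul p).add ((hint x').const_mul q)
  calc (∫ y in G, φ (gauge K (y - (p • x + q • x'))))
      ≤ ∫ y in G, (p * φ (gauge K (y - x)) + q * φ (gauge K (y - x'))) :=
        integral_mono (hint _) hintsum hptwise
    _ = p • (∫ y in G, φ (gauge K (y - x))) + q • (∫ y in G, φ (gauge K (y - x'))) := by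
        rw [integral_add ((hint x).const_mul p) ((hint x').const_mul q),
          integral_const_mul, integral_const_mul, smul_eq_mul, smul_eq_mul]

theorem F_strict_midpoint
    (hK_conv : Convex ℝ K) (habs : Absorbent ℝ K)
    (hgauge_cont : Continuous (gauge K))
    {c C : ℝ} (hc : 0 < c) (hCpos : 0 ≤ C)
    (hcg : ∀ u : EuclideanSpace ℝ (Fin N), c * ‖u‖ ≤ gauge K u)
    (hC : ∀ u : EuclideanSpace ℝ (Fin N), gauge K u ≤ C * ‖u‖)
    (hG_meas : MeasurableSet G) (hG_bdd : IsBounded G)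
    {φ : ℝ → ℝ} (hφ_mono : Monotone φ) (hφ_nonneg : ∀ t, 0 ≤ φ t)
    (hφ_conv : ConvexOn ℝ (Set.Ici (0 : ℝ)) φ)
    (hφ_smono : StrictMonoOn φ (Set.Ici (0 : ℝ)))
    {x₀ v : EuclideanSpace ℝ (Fin N)} (hv : v ≠ 0)
    (hd : ∀ r : ℝ, 0 < r → 0 < volume (G ∩ ball x₀ r)) :
    2 * (∫ y in G, φ (gauge K (y - x₀)))
      < (∫ y in G, φ (gauge K (y - (x₀ + v)))) + (∫ y in G, φ (gauge K (y - (x₀ - v)))) := by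
  have hint := fun z => F_integrable hgauge_cont hCpos hC hG_meas hG_bdd hφ_mono hφ_nonneg z
  have hvn : 0 < ‖v‖ := norm_pos_iff.2 hv
  have hCc : 0 < C := by
    rcases lt_or_eq_of_le hCpos with h | h
    · exact h
    · exfalso
      have h1 := (hcg v).trans (hC v)
      rw [← h] at h1
      simp only [zero_mul] at h1
      nlinarith
  set lo : ℝ := c * ‖v‖ / 4 with hlodef
  have hlopos : 0 < lo := by positivity
  set δ : ℝ := min (c * ‖v‖ / (4 * C)) (‖v‖ / 4) with hδdef
  have hδpos : 0 < δ := lt_min (by positivity) (by positivity)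
  set h : EuclideanSpace ℝ (Fin N) → ℝ := fun y =>
    φ (gauge K (y - (x₀ + v))) + φ (gauge K (y - (x₀ - v))) - 2 * φ (gauge K (y - x₀)) with hhdef
  have hhalf : (2⁻¹ : ℝ) + 2⁻¹ = 1 := by norm_num
  have hnonneg : ∀ y, 0 ≤ h y := by
    intro y
    have hdecomp : y - x₀ = (2⁻¹ : ℝ) • (y - (x₀ + v)) + (2⁻¹ : ℝ) • (y - (x₀ - v)) := by
      module
    have hg : gauge K (y - x₀)
        ≤ 2⁻¹ * gauge K (y - (x₀ + v)) + 2⁻¹ * gauge K (y - (x₀ - v)) := by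
      rw [hdecomp]
      calc gauge K ((2⁻¹ : ℝ) • (y - (x₀ + v)) + (2⁻¹ : ℝ) • (y - (x₀ - v)))
          ≤ gauge K ((2⁻¹ : ℝ) • (y - (x₀ + v))) + gauge K ((2⁻¹ : ℝ) • (y - (x₀ - v))) :=
            gauge_add_le hK_conv habs _ _
        _ = 2⁻¹ * gauge K (y - (x₀ + v)) + 2⁻¹ * gauge K (y - (x₀ - v)) := by
            rw [gauge_smul_of_nonneg (by norm_num), gauge_smul_of_nonneg (by norm_num),
              smul_eq_mul, smul_eq_mul]
    have h2 : φ ((2⁻¹:ℝ) • gauge K (y - (x₀ + v)) + (2⁻¹:ℝ) • gauge K (y - (x₀ - v)))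
        ≤ (2⁻¹:ℝ) • φ (gauge K (y - (x₀ + v))) + (2⁻¹:ℝ) • φ (gauge K (y - (x₀ - v))) :=
      hφ_conv.2 (Set.mem_Ici.2 (gauge_nonneg (y - (x₀ + v))))
        (Set.mem_Ici.2 (gauge_nonneg (y - (x₀ - v)))) (by norm_num : (0:ℝ) ≤ 2⁻¹)
        (by norm_num : (0:ℝ) ≤ 2⁻¹) hhalf
    simp only [smul_eq_mul] at h2
    have h3 := (hφ_mono hg).trans h2
    simp only [hhdef]
    linarith
  set η : ℝ := 2 * (φ (3 * lo) - φ lo) with hηdef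
  have hηpos : 0 < η := by
    have := hφ_smono (Set.mem_Ici.2 hlopos.le) (Set.mem_Ici.2 (by positivity : (0:ℝ) ≤ 3 * lo))
      (by linarith)
    simp only [hηdef]; linarith
  have hstrict : ∀ y ∈ ball x₀ δ, η ≤ h y := by
    intro y hy
    rw [mem_ball, dist_eq_norm] at hy
    have hup : φ (gauge K (y - x₀)) ≤ φ lo := by
      refine hφ_mono ((hC _).trans ?_)
      have h1 : ‖y - x₀‖ ≤ δ := hy.le
      have h2 : C * ‖y - x₀‖ ≤ C * δ := mul_le_mul_of_nonneg_left h1 hCpos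
      have h3 : C * δ ≤ C * (c * ‖v‖ / (4 * C)) :=
        mul_le_mul_of_nonneg_left (min_le_left _ _) hCpos
      have h4 : C * (c * ‖v‖ / (4 * C)) = lo := by
        field_simp [hlodef]
        ring
      linarith
    have hδv : δ ≤ ‖v‖ / 4 := min_le_right _ _
    have hlow : ∀ w : EuclideanSpace ℝ (Fin N), ‖v‖ - δ ≤ ‖w - x₀ - v‖ →
        φ (3 * lo) ≤ φ (gauge K (w - x₀ - v)) := by
      intro w hw
      refine hφ_mono (le_trans ?_ (hcg _))
      have : 3 * lo ≤ c * (‖v‖ - δ) := by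
        rw [hlodef]
        have : c * δ ≤ c * (‖v‖ / 4) := mul_le_mul_of_nonneg_left hδv hc.le
        nlinarith
      refine this.trans (mul_le_mul_of_nonneg_left hw hc.le)
    have hna : ‖v‖ - δ ≤ ‖y - x₀ - v‖ := by
      have := norm_sub_norm_le v (y - x₀)
      have h5 : ‖v - (y - x₀)‖ = ‖y - x₀ - v‖ := norm_sub_rev _ _
      have h6 : ‖y - x₀‖ < δ := hy
      calc ‖v‖ - δ ≤ ‖v‖ - ‖y - x₀‖ := by linarith
        _ ≤ ‖v - (y - x₀)‖ := norm_sub_norm_le _ _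
        _ = ‖y - x₀ - v‖ := h5
    have hnb : ‖v‖ - δ ≤ ‖y - x₀ + v‖ := by
      have h5 : ‖(-v) - (y - x₀)‖ = ‖y - x₀ + v‖ := by
        rw [norm_sub_rev]
        congr 1
        abel
      have h6 : ‖y - x₀‖ < δ := hy
      calc ‖v‖ - δ ≤ ‖-v‖ - ‖y - x₀‖ := by rw [norm_neg]; linarith
        _ ≤ ‖(-v) - (y - x₀)‖ := norm_sub_norm_le _ _
        _ = ‖y - x₀ + v‖ := h5
    have ha : φ (3 * lo) ≤ φ (gauge K (y - (x₀ + v))) := by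
      have : y - (x₀ + v) = y - x₀ - v := by abel
      rw [this]
      exact hlow y hna
    have hb : φ (3 * lo) ≤ φ (gauge K (y - (x₀ - v))) := by
      have heq : y - (x₀ - v) = y - x₀ + v := by abel
      rw [heq]
      refine hφ_mono (le_trans ?_ (hcg _))
      have : 3 * lo ≤ c * (‖v‖ - δ) := by
        rw [hlodef]
        have : c * δ ≤ c * (‖v‖ / 4) := mul_le_mul_of_nonneg_left hδv hc.le
        nlinarith
      refine this.trans (mul_le_mul_of_nonneg_left hnb hc.le)
    simp only [hhdef, hηdef]
    linarith
  -- positivity of the integral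
  have hIint : IntegrableOn h G volume := by
    simp only [hhdef]
    exact (((hint (x₀ + v)).add (hint (x₀ - v))).sub ((hint x₀).const_mul 2))
  have hpos : 0 < ∫ y in G, h y := by
    rw [setIntegral_pos_iff_support_of_nonneg_ae
      (Filter.Eventually.of_forall fun y => hnonneg y) hIint]
    refine lt_of_lt_of_le ?_ (measure_mono (show G ∩ ball x₀ δ ⊆ Function.support h ∩ G from ?_))
    · exact hd δ hδpos
    · rintro y ⟨hyG, hyB⟩
      exact ⟨fun h0 => by have := hstrict y hyB; rw [h0] at this; linarith, hyG⟩
  have hsplit : (∫ y in G, h y) = (∫ y in G, φ (gauge K (y - (x₀ + v))))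
      + (∫ y in G, φ (gauge K (y - (x₀ - v)))) - 2 * (∫ y in G, φ (gauge K (y - x₀))) := by
    have hadd : Integrable (fun y => φ (gauge K (y - (x₀ + v))) + φ (gauge K (y - (x₀ - v))))
        (volume.restrict G) := (hint (x₀ + v)).add (hint (x₀ - v))
    have hmul : Integrable (fun y => 2 * φ (gauge K (y - x₀))) (volume.restrict G) :=
      (hint x₀).const_mul 2
    simp only [hhdef]
    rw [integral_sub hadd hmul, integral_add (hint (x₀ + v)) (hint (x₀ - v)), integral_const_mul]
  rw [hsplit] at hpos
  linarith
end

theorem exists_frontier_seg {E : Type*} [NormedAddCommGroup E] [NormedSpace ℝ E] [Nontrivial E]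
    {G : Set E} (hG_bdd : IsBounded G) {x : E} (hx : x ∈ closure G) :
    ∃ z ∈ frontier G, ∃ w ∈ frontier G, x ∈ segment ℝ z w := by
  by_cases hxf : x ∈ frontier G
  · exact ⟨x, hxf, x, hxf, left_mem_segment ℝ x x⟩
  have hxi : x ∈ interior G := by
    by_contra h
    exact hxf ⟨hx, h⟩
  obtain ⟨e, he⟩ := exists_ne (0 : E)
  have hen : 0 < ‖e‖ := norm_pos_iff.2 he
  set S := {t : ℝ | x + t • e ∈ closure G} with hSdef
  have hS0 : (0 : ℝ) ∈ S := by simp [hSdef, hx]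
  have hScont : Continuous fun t : ℝ => x + t • e :=
    continuous_const.add (continuous_id.smul continuous_const)
  have hSclosed : IsClosed S := IsClosed.preimage hScont isClosed_closure
  obtain ⟨R, hR⟩ := hG_bdd.closure.subset_closedBall 0
  have hSbdd : ∀ t ∈ S, |t| ≤ (R + ‖x‖) / ‖e‖ := by
    intro t ht
    have h1 : ‖x + t • e‖ ≤ R := by
      have := hR ht
      simpa [mem_closedBall, dist_zero_right] using this
    have h2 : ‖t • e‖ ≤ R + ‖x‖ := by
      calc ‖t • e‖ = ‖(x + t • e) - x‖ := by congr 1; abel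
        _ ≤ ‖x + t • e‖ + ‖x‖ := norm_sub_le _ _
        _ ≤ R + ‖x‖ := by linarith
    rw [norm_smul, Real.norm_eq_abs] at h2
    rw [le_div_iff₀ hen]
    exact h2
  have hbddA : BddAbove S := ⟨(R + ‖x‖) / ‖e‖, fun t ht => (le_abs_self t).trans (hSbdd t ht)⟩
  have hbddB : BddBelow S := ⟨-((R + ‖x‖) / ‖e‖), fun t ht => by
    have := hSbdd t ht
    have := neg_abs_le t
    linarith⟩
  set u := sSup S with hudef
  set l := sInf S with hldef
  have hu : u ∈ S := hSclosed.csSup_mem ⟨0, hS0⟩ hbddA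
  have hl : l ∈ S := hSclosed.csInf_mem ⟨0, hS0⟩ hbddB
  have hu0 : 0 ≤ u := le_csSup hbddA hS0
  have hl0 : l ≤ 0 := csInf_le hbddB hS0
  have hzf : x + u • e ∈ frontier G := by
    refine ⟨hu, fun hzi => ?_⟩
    obtain ⟨ε, hε, hball⟩ := Metric.isOpen_iff.1 isOpen_interior _ hzi
    have hmem : u + ε / (2 * ‖e‖) ∈ S := by
      have : x + (u + ε / (2 * ‖e‖)) • e ∈ ball (x + u • e) ε := by
        rw [mem_ball, dist_eq_norm]
        have heq : (x + (u + ε / (2 * ‖e‖)) • e) - (x + u • e) = (ε / (2 * ‖e‖)) • e := by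
          rw [add_smul]; abel
        rw [heq, norm_smul, Real.norm_eq_abs, abs_of_nonneg (by positivity)]
        have hkey : ε / (2 * ‖e‖) * ‖e‖ = ε / 2 := by field_simp
        rw [hkey]
        linarith
      exact subset_closure (interior_subset (hball this))
    have := le_csSup hbddA hmem
    have hpos : 0 < ε / (2 * ‖e‖) := by positivity
    linarith
  have hwf : x + l • e ∈ frontier G := by
    refine ⟨hl, fun hzi => ?_⟩
    obtain ⟨ε, hε, hball⟩ := Metric.isOpen_iff.1 isOpen_interior _ hzi
    have hmem : l - ε / (2 * ‖e‖) ∈ S := by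
      have : x + (l - ε / (2 * ‖e‖)) • e ∈ ball (x + l • e) ε := by
        rw [mem_ball, dist_eq_norm]
        have heq : (x + (l - ε / (2 * ‖e‖)) • e) - (x + l • e) = -((ε / (2 * ‖e‖)) • e) := by
          rw [sub_smul]; abel
        rw [heq, norm_neg, norm_smul, Real.norm_eq_abs, abs_of_nonneg (by positivity)]
        have hkey : ε / (2 * ‖e‖) * ‖e‖ = ε / 2 := by field_simp
        rw [hkey]
        linarith
      exact subset_closure (interior_subset (hball this))
    have := csInf_le hbddB hmem
    have hpos : 0 < ε / (2 * ‖e‖) := by positivity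
    linarith
  have hlu : l < u := by
    rcases lt_or_eq_of_le (hl0.trans hu0) with h | h
    · exact h
    · exfalso
      have hu0' : u = 0 := by linarith [h ▸ hl0]
      have : x + u • e ∈ interior G := by rw [hu0', zero_smul, add_zero]; exact hxi
      exact hzf.2 this
  have hne : u - l ≠ 0 := sub_ne_zero.2 hlu.ne'
  refine ⟨x + u • e, hzf, x + l • e, hwf, ?_⟩
  refine ⟨-l / (u - l), u / (u - l), ?_, ?_, ?_, ?_⟩
  · apply div_nonneg (by linarith) (by linarith)
  · apply div_nonneg (by linarith) (by linarith)
  · field_simp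
    ring
  · have hcoef : (-l / (u - l)) * u + (u / (u - l)) * l = 0 := by
      field_simp
      ring
    have hsum : (-l / (u - l)) + (u / (u - l)) = 1 := by field_simp; ring
    have : (-l / (u - l)) • (x + u • e) + (u / (u - l)) • (x + l • e)
        = ((-l / (u - l)) + (u / (u - l))) • x
          + ((-l / (u - l)) * u + (u / (u - l)) * l) • e := by
      module
    rw [this, hcoef, hsum, one_smul, zero_smul, add_zero]

theorem exists_density_point {N : ℕ} {S : Set (EuclideanSpace ℝ (Fin N))}
    (hS_meas : MeasurableSet S) (hS_pos : 0 < volume S) :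
    ∃ x₀ ∈ S, ∀ r : ℝ, 0 < r → 0 < volume (S ∩ ball x₀ r) := by
  have hae := Besicovitch.ae_tendsto_measure_inter_div (volume : Measure (EuclideanSpace ℝ (Fin N))) S
  set P : EuclideanSpace ℝ (Fin N) → Prop := fun x =>
    Tendsto (fun r => volume (S ∩ closedBall x r) / volume (closedBall x r)) (𝓝[>] 0) (𝓝 1)
    with hPdef
  have h1 : (volume.restrict S) {x | ¬ P x} = 0 := by
    rw [← ae_iff] at *
    exact hae
  have h2 : 0 < (volume.restrict S) {x | P x} := by
    by_contra hcon
    push_neg at hcon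
    have h0 : (volume.restrict S) {x | P x} = 0 := le_antisymm hcon zero_le
    have huniv : (volume.restrict S) Set.univ ≤ (volume.restrict S) {x | P x}
        + (volume.restrict S) {x | ¬ P x} := by
      have : (Set.univ : Set (EuclideanSpace ℝ (Fin N))) ⊆ {x | P x} ∪ {x | ¬ P x} := by
        intro y _
        by_cases h : P y
        · exact Or.inl h
        · exact Or.inr h
      exact (measure_mono this).trans (measure_union_le _ _)
    rw [Measure.restrict_apply_univ, h0, h1, add_zero] at huniv
    exact absurd (le_antisymm huniv zero_le) hS_pos.ne'
  rw [Measure.restrict_apply' hS_meas] at h2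
  obtain ⟨x₀, hx₀P, hx₀S⟩ := nonempty_of_measure_ne_zero h2.ne'
  refine ⟨x₀, hx₀S, fun r hr => ?_⟩
  have hev : ∀ᶠ ρ in 𝓝[>] (0:ℝ),
      (1/2 : ℝ≥0∞) < volume (S ∩ closedBall x₀ ρ) / volume (closedBall x₀ ρ) :=
    hx₀P.eventually (eventually_gt_nhds (by norm_num))
  have hIoo : Set.Ioo (0:ℝ) r ∈ 𝓝[>] (0:ℝ) := Ioo_mem_nhdsGT_of_mem ⟨le_refl 0, hr⟩
  obtain ⟨ρ, hρ1, hρ2⟩ := (hev.and (eventually_of_mem hIoo fun _ h => h)).exists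
  have hnum : volume (S ∩ closedBall x₀ ρ) ≠ 0 := by
    intro h0
    rw [h0, ENNReal.zero_div] at hρ1
    exact absurd hρ1 (by norm_num)
  have hsub : S ∩ closedBall x₀ ρ ⊆ S ∩ ball x₀ r :=
    Set.inter_subset_inter_right S (closedBall_subset_ball hρ2.2)
  exact lt_of_lt_of_le (pos_iff_ne_zero.2 hnum) (measure_mono hsub)

theorem convex_interior_nonempty_of_pos {N : ℕ} {M : Set (EuclideanSpace ℝ (Fin N))}
    (hM : Convex ℝ M) (hpos : 0 < volume M) : (interior M).Nonempty := by
  by_contra h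
  rw [Set.not_nonempty_iff_eq_empty] at h
  have hspan : affineSpan ℝ M ≠ ⊤ := by
    intro htop
    rw [← hM.interior_nonempty_iff_affineSpan_eq_top] at htop
    rw [h] at htop
    exact Set.not_nonempty_empty htop
  have hle : volume M ≤ volume (affineSpan ℝ M : Set (EuclideanSpace ℝ (Fin N))) :=
    measure_mono (subset_affineSpan ℝ M)
  rw [Measure.addHaar_affineSubspace volume _ hspan] at hle
  exact absurd (le_antisymm hle zero_le) hpos.ne'

/-- **Theorem 2.3 (second part): `G` is a regular sublevel set of `f^φ`.** Let `K ⊂ ℝ^N` be a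
convex body containing the origin in its interior, `G ⊂ ℝ^N` a bounded measurable set of
positive Lebesgue measure which is uniformly `K`-dense, and `φ(t) = μ([0,t))` for a locally
finite Borel measure `μ`, with `φ` convex and strictly increasing on `[0,∞)`.  Then there is
`s > 0` such that the open sublevel set `A = {f^φ < s}` satisfies `A ⊆ G ⊆ Ā`,
`∂G = ∂A`, and `∂A = {f^φ = s} ∩ Ā`. -/
theorem K_dense_sublevel_set
    (N : ℕ) (K G : Set (EuclideanSpace ℝ (Fin N)))
    (hK_conv : Convex ℝ K) (hK_comp : IsCompact K)
    (hK0 : (0 : EuclideanSpace ℝ (Fin N)) ∈ interior K)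
    (hG_meas : MeasurableSet G) (hG_bdd : Bornology.IsBounded G)
    (hG_pos : 0 < volume G)
    (hdense : ∀ r : ℝ, 0 < r → ∀ x ∈ frontier G, ∀ y ∈ frontier G,
      volume (G ∩ (x +ᵥ r • K)) = volume (G ∩ (y +ᵥ r • K)))
    (μ : Measure ℝ) (hμ : IsLocallyFiniteMeasure μ)
    (φ : ℝ → ℝ) (hφ_def : ∀ t, φ t = (μ (Set.Ico 0 t)).toReal)
    (hφ_conv : ConvexOn ℝ (Set.Ici (0 : ℝ)) φ)
    (hφ_mono : StrictMonoOn φ (Set.Ici (0 : ℝ))) :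
    ∃ s : ℝ, 0 < s ∧
      (({x | (∫ y in G, φ (gauge K (y - x))) < s} : Set (EuclideanSpace ℝ (Fin N))) ⊆ G) ∧
      G ⊆ closure {x | (∫ y in G, φ (gauge K (y - x))) < s} ∧
      frontier G = frontier {x | (∫ y in G, φ (gauge K (y - x))) < s} ∧
      frontier {x | (∫ y in G, φ (gauge K (y - x))) < s} =
        {x | (∫ y in G, φ (gauge K (y - x))) = s} ∩
          closure {x | (∫ y in G, φ (gauge K (y - x))) < s} := by
  classical
  obtain ⟨hφm, hφmeas, hφ0, hφnn⟩ := phi_pack μ φ hφ_def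
  set F : EuclideanSpace ℝ (Fin N) → ℝ := fun x => ∫ y in G, φ (gauge K (y - x)) with hFdef
  suffices hmain : ∃ s : ℝ, 0 < s ∧ ({x | F x < s} ⊆ G) ∧ G ⊆ closure {x | F x < s} ∧
      frontier G = frontier {x | F x < s} ∧
      frontier {x | F x < s} = {x | F x = s} ∩ closure {x | F x < s} by
    exact hmain
  obtain ⟨hgauge_cont, ⟨c, C, hc, hC0, hcg, hC⟩, hmem_smul⟩ :=
    gauge_pack hK_conv hK_comp.isClosed hK_comp.isBounded hK0
  have hint := fun z => F_integrable hgauge_cont hC0.le hC hG_meas hG_bdd hφm hφnn z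
  have habs : Absorbent ℝ K := absorbent_nhds_zero (mem_interior_iff_mem_nhds.1 hK0)
  have hconv : ConvexOn ℝ Set.univ F :=
    F_convexOn hK_conv habs hgauge_cont hC0.le hC hG_meas hG_bdd hφm hφnn hφ_conv
  have hFcont : Continuous F := by
    have := hconv.continuousOn isOpen_univ
    rwa [← continuousOn_univ]
  have hGne : G.Nonempty := nonempty_of_measure_ne_zero hG_pos.ne'
  have hFnn : ∀ x, 0 ≤ F x := fun x => setIntegral_nonneg hG_meas fun y _ => hφnn _
  by_cases hNE : (frontier G).Nonempty
  swap
  · -- degenerate case : no frontier, so the whole space is a single point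
    rw [Set.not_nonempty_iff_eq_empty] at hNE
    have hclopen : closure G = interior G := by
      refine subset_antisymm (fun x hx => ?_) interior_subset_closure
      by_contra h
      have : x ∈ frontier G := ⟨hx, h⟩
      rw [hNE] at this
      exact this
    have hcl_univ : closure G = Set.univ := by
      have h1 : IsClopen (closure G) := ⟨isClosed_closure, hclopen ▸ isOpen_interior⟩
      rcases isClopen_iff.1 h1 with h | h
      · exact absurd (hGne.mono subset_closure) (h ▸ Set.not_nonempty_empty)
      · exact h
    haveI : Subsingleton (EuclideanSpace ℝ (Fin N)) := by
      obtain ⟨R, hR⟩ := (hG_bdd.closure.subset_closedBall 0)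
      rw [hcl_univ] at hR
      constructor
      intro a b
      have hz : ∀ x : EuclideanSpace ℝ (Fin N), x = 0 := by
        intro x
        by_contra hx
        have hxn : 0 < ‖x‖ := norm_pos_iff.2 hx
        have h1 : ((|R| + 1) / ‖x‖) • x ∈ closedBall (0 : EuclideanSpace ℝ (Fin N)) R :=
          hR (Set.mem_univ _)
        rw [mem_closedBall, dist_zero_right, norm_smul, Real.norm_eq_abs,
          abs_of_nonneg (by positivity)] at h1
        rw [div_mul_cancel₀ _ hxn.ne'] at h1
        have := le_abs_self R
        linarith
      rw [hz a, hz b]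
    have hGuniv : G = Set.univ := hGne.eq_univ
    refine ⟨F 0 + 1, by have := hFnn 0; linarith, ?_, ?_, ?_, ?_⟩
    · intro x _
      rw [hGuniv]; exact Set.mem_univ x
    · intro x _
      have hx0 : x = 0 := Subsingleton.elim x 0
      have : x ∈ {x | F x < F 0 + 1} := by
        rw [Set.mem_setOf_eq, hx0]
        linarith
      exact subset_closure this
    · have hAuniv : {x | F x < F 0 + 1} = Set.univ := by
        refine Set.eq_univ_of_forall fun x => ?_
        rw [Set.mem_setOf_eq, Subsingleton.elim x 0]
        linarith
      rw [hGuniv, hAuniv]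
    · have hAuniv : {x | F x < F 0 + 1} = Set.univ := by
        refine Set.eq_univ_of_forall fun x => ?_
        rw [Set.mem_setOf_eq, Subsingleton.elim x 0]
        linarith
      have hlev : {x | F x = F 0 + 1} = (∅ : Set (EuclideanSpace ℝ (Fin N))) := by
        refine Set.eq_empty_of_forall_notMem fun x hx => ?_
        rw [Set.mem_setOf_eq, Subsingleton.elim x 0] at hx
        linarith
      rw [hAuniv, hlev, frontier_univ, Set.empty_inter]
  -- main case
  obtain ⟨z₀, hz₀⟩ := hNE
  haveI : Nontrivial (EuclideanSpace ℝ (Fin N)) := by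
    by_contra h
    rw [not_nontrivial_iff_subsingleton] at h
    rw [hGne.eq_univ, frontier_univ] at hz₀
    exact hz₀
  haveI : NullSingletonClass (volume : Measure (EuclideanSpace ℝ (Fin N))) := by infer_instance
  have hgauge_pos : ∀ u : EuclideanSpace ℝ (Fin N), u ≠ 0 → 0 < gauge K u := by
    intro u hu
    have h1 : 0 < c * ‖u‖ := mul_pos hc (norm_pos_iff.2 hu)
    linarith [hcg u]
  set s : ℝ := F z₀ with hsdef
  have hFconst : ∀ z ∈ frontier G, F z = s :=
    fun z hz => F_const hK_conv hK_comp hK0 hG_meas hG_bdd hG_pos hdense μ φ hφ_def hz hz₀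
  have hspos : 0 < s := by
    show (0 : ℝ) < ∫ y in G, φ (gauge K (y - z₀))
    rw [setIntegral_pos_iff_support_of_nonneg_ae
      (Filter.Eventually.of_forall fun y => hφnn _) (hint z₀)]
    have hsub : G \ {z₀} ⊆ Function.support (fun y => φ (gauge K (y - z₀))) ∩ G := by
      rintro y ⟨hyG, hyz⟩
      refine ⟨?_, hyG⟩
      have h1 : 0 < gauge K (y - z₀) := hgauge_pos _ (sub_ne_zero.2 (by simpa using hyz))
      have h2 : φ 0 < φ (gauge K (y - z₀)) :=
        hφ_mono (Set.mem_Ici.2 le_rfl) (Set.mem_Ici.2 h1.le) h1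
      rw [hφ0] at h2
      exact ne_of_gt h2
    refine lt_of_lt_of_le ?_ (measure_mono hsub)
    rwa [measure_diff_null (measure_singleton z₀)]
  have hFG_le : ∀ x ∈ closure G, F x ≤ s := by
    intro x hx
    obtain ⟨z, hz, w, hw, a, b, ha, hb, hab, hxe⟩ := exists_frontier_seg hG_bdd hx
    have h1 : F (a • z + b • w) ≤ a • F z + b • F w :=
      hconv.2 (Set.mem_univ z) (Set.mem_univ w) ha hb hab
    rw [hxe] at h1
    rw [smul_eq_mul, smul_eq_mul, hFconst z hz, hFconst w hw, ← add_mul, hab, one_mul] at h1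
    exact h1
  have hA_open : IsOpen {x | F x < s} := isOpen_lt hFcont continuous_const
  have hA_convex : Convex ℝ {x | F x < s} := by
    have := hconv.convex_lt s
    rwa [Set.sep_univ] at this
  have hM_convex : Convex ℝ {x | F x ≤ s} := by
    have := hconv.convex_le s
    rwa [Set.sep_univ] at this
  have hAsubM : {x | F x < s} ⊆ {x | F x ≤ s} := fun x hx => show F x ≤ s from le_of_lt hx
  obtain ⟨e, he⟩ := exists_ne (0 : EuclideanSpace ℝ (Fin N))
  have hen : 0 < ‖e‖ := norm_pos_iff.2 he
  -- A is nonempty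
  have hA_ne : {x | F x < s}.Nonempty := by
    by_contra hAe
    rw [Set.not_nonempty_iff_eq_empty] at hAe
    have hge : ∀ x, s ≤ F x := by
      intro x
      by_contra h
      push_neg at h
      have : x ∈ {x | F x < s} := h
      rw [hAe] at this
      exact this
    have hGM : G ⊆ {x | F x ≤ s} := fun x hx => hFG_le x (subset_closure hx)
    have hMpos : 0 < volume {x | F x ≤ s} := lt_of_lt_of_le hG_pos (measure_mono hGM)
    have hSmeas : MeasurableSet (G ∩ interior {x | F x ≤ s}) :=
      hG_meas.inter isOpen_interior.measurableSet
    have hSpos : 0 < volume (G ∩ interior {x | F x ≤ s}) := by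
      have hnull : volume (G \ interior {x | F x ≤ s}) = 0 := by
        refine measure_mono_null (fun y hy => ?_) (hM_convex.addHaar_frontier volume)
        exact ⟨subset_closure (hGM hy.1), hy.2⟩
      have hcover : volume G ≤ volume (G ∩ interior {x | F x ≤ s})
          + volume (G \ interior {x | F x ≤ s}) := by
        refine (measure_mono (fun y hy => ?_)).trans (measure_union_le _ _)
        by_cases h : y ∈ interior {x | F x ≤ s}
        · exact Or.inl ⟨hy, h⟩
        · exact Or.inr ⟨hy, h⟩
      rw [hnull, add_zero] at hcover
      exact lt_of_lt_of_le hG_pos hcover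
    obtain ⟨x₀, hx₀S, hd⟩ := exists_density_point hSmeas hSpos
    have hd' : ∀ r : ℝ, 0 < r → 0 < volume (G ∩ ball x₀ r) := by
      intro r hr
      refine lt_of_lt_of_le (hd r hr) (measure_mono ?_)
      exact Set.inter_subset_inter_left _ Set.inter_subset_left
    obtain ⟨ε, hε, hball⟩ := Metric.isOpen_iff.1 isOpen_interior _ hx₀S.2
    set v : EuclideanSpace ℝ (Fin N) := (ε / (2 * ‖e‖)) • e with hvdef
    have hvne : v ≠ 0 := smul_ne_zero (by positivity) he
    have hvnorm : ‖v‖ < ε := by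
      rw [hvdef, norm_smul, Real.norm_eq_abs, abs_of_nonneg (by positivity)]
      have h0 : ε / (2 * ‖e‖) * ‖e‖ = ε / 2 := by field_simp
      rw [h0]; linarith
    have hMmem : ∀ w : EuclideanSpace ℝ (Fin N), ‖w - x₀‖ < ε → F w ≤ s := by
      intro w hw
      have : w ∈ ball x₀ ε := by rwa [mem_ball, dist_eq_norm]
      exact (interior_subset (hball this) : w ∈ {x | F x ≤ s})
    have h1 : F (x₀ + v) ≤ s := hMmem _ (by simpa using hvnorm)
    have h2 : F (x₀ - v) ≤ s := by
      refine hMmem _ ?_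
      rw [show x₀ - v - x₀ = -v by abel, norm_neg]
      exact hvnorm
    have hstrict : 2 * F x₀ < F (x₀ + v) + F (x₀ - v) :=
      F_strict_midpoint hK_conv habs hgauge_cont hc hC0.le hcg hC hG_meas hG_bdd
        hφm hφnn hφ_conv hφ_mono hvne hd'
    have h3 := hge x₀
    have h4 := hge (x₀ + v)
    have h5 := hge (x₀ - v)
    linarith
  -- closure of A is the closed sublevel set
  have hsubclo : {x | F x ≤ s} ⊆ closure {x | F x < s} := by
    intro x hx
    obtain ⟨a, ha⟩ := hA_ne
    have hseq : ∀ n : ℕ, (1 / (n + 1 : ℝ)) • a + (1 - 1 / (n + 1 : ℝ)) • x ∈ {x | F x < s} := by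
      intro n
      have hθ : 0 < 1 / (n + 1 : ℝ) := by positivity
      have hθ1 : 1 / (n + 1 : ℝ) ≤ 1 := by
        rw [div_le_one (by positivity)]
        linarith [Nat.cast_nonneg (α := ℝ) n]
      have hco := hconv.2 (Set.mem_univ a) (Set.mem_univ x) hθ.le
        (by linarith : (0:ℝ) ≤ 1 - 1 / (n + 1 : ℝ))
        (by ring : 1 / (n + 1 : ℝ) + (1 - 1 / (n + 1 : ℝ)) = 1)
      rw [smul_eq_mul, smul_eq_mul] at hco
      refine lt_of_le_of_lt hco ?_
      have hFa : F a < s := ha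
      have hFx : F x ≤ s := hx
      nlinarith
    have h1 : Tendsto (fun n : ℕ => 1 / (n + 1 : ℝ)) atTop (𝓝 0) :=
      tendsto_one_div_add_atTop_nhds_zero_nat
    have h2 : Tendsto (fun n : ℕ => (1 / (n + 1 : ℝ)) • a + (1 - 1 / (n + 1 : ℝ)) • x) atTop
        (𝓝 ((0 : ℝ) • a + (1 - 0 : ℝ) • x)) := by
      refine Tendsto.add ?_ ?_
      · exact h1.smul_const a
      · exact (tendsto_const_nhds.sub h1).smul_const x
    have h3 : Tendsto (fun n : ℕ => (1 / (n + 1 : ℝ)) • a + (1 - 1 / (n + 1 : ℝ)) • x) atTop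
        (𝓝 x) := by simpa using h2
    refine mem_closure_of_frequently_of_tendsto ?_ h3
    exact Filter.Eventually.frequently (Filter.Eventually.of_forall hseq)
  have hcloA : closure {x | F x < s} = {x | F x ≤ s} := by
    refine subset_antisymm ?_ hsubclo
    exact closure_minimal hAsubM (isClosed_le hFcont continuous_const)
  have hGclo : G ⊆ closure {x | F x < s} := fun x hx =>
    hsubclo (hFG_le x (subset_closure hx))
  -- A sits inside the interior of G
  have hA_int : {x | F x < s} ⊆ interior G := by
    have hdisj : Disjoint (interior G) (closure G)ᶜ :=
      disjoint_compl_right.mono_left interior_subset_closure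
    have hcover : {x | F x < s} ⊆ interior G ∪ (closure G)ᶜ := by
      intro x hx
      have hnf : x ∉ frontier G := by
        intro hf
        have h1 : F x < s := hx
        rw [hFconst x hf] at h1
        exact lt_irrefl s h1
      by_cases h : x ∈ closure G
      · left
        by_contra h2
        exact hnf ⟨h, h2⟩
      · right; exact h
    rcases IsPreconnected.subset_or_subset isOpen_interior (isClosed_closure (s := G)).isOpen_compl
      hdisj hcover hA_convex.isPreconnected with h | h
    · exact h
    · exfalso
      have hclocl : closure G ⊆ closure {x | F x < s} :=
        closure_minimal hGclo isClosed_closure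
      have hfr : closure G ⊆ frontier {x | F x < s} := by
        intro y hy
        rw [hA_open.frontier_eq]
        refine ⟨hclocl hy, fun hyA => ?_⟩
        exact (h hyA) hy
      have h0 : volume G = 0 :=
        measure_mono_null (subset_closure.trans hfr) (hA_convex.addHaar_frontier volume)
      rw [h0] at hG_pos
      exact lt_irrefl 0 hG_pos
  -- interior of G sits inside A
  have hint_A : interior G ⊆ {x | F x < s} := by
    intro x hxi
    by_contra hnot
    have hxle : F x ≤ s := hFG_le x (subset_closure (interior_subset hxi))
    have hxeq : F x = s := le_antisymm hxle (not_lt.1 hnot)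
    obtain ⟨ε, hε, hball⟩ := Metric.isOpen_iff.1 isOpen_interior _ hxi
    set v : EuclideanSpace ℝ (Fin N) := (ε / (2 * ‖e‖)) • e with hvdef
    have hvne : v ≠ 0 := smul_ne_zero (by positivity) he
    have hvnorm : ‖v‖ < ε := by
      rw [hvdef, norm_smul, Real.norm_eq_abs, abs_of_nonneg (by positivity)]
      have h0 : ε / (2 * ‖e‖) * ‖e‖ = ε / 2 := by field_simp
      rw [h0]; linarith
    have hmem : ∀ w : EuclideanSpace ℝ (Fin N), ‖w - x‖ < ε → F w ≤ s := by
      intro w hw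
      have : w ∈ ball x ε := by rwa [mem_ball, dist_eq_norm]
      exact hFG_le w (subset_closure (interior_subset (hball this)))
    have h1 : F (x + v) ≤ s := hmem _ (by simpa using hvnorm)
    have h2 : F (x - v) ≤ s := by
      refine hmem _ ?_
      rw [show x - v - x = -v by abel, norm_neg]
      exact hvnorm
    have hdec : x = (2⁻¹ : ℝ) • (x + v) + (2⁻¹ : ℝ) • (x - v) := by module
    have hmid : F x ≤ (2⁻¹ : ℝ) * F (x + v) + (2⁻¹ : ℝ) * F (x - v) := by
      have hco := hconv.2 (Set.mem_univ (x + v)) (Set.mem_univ (x - v))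
        (by norm_num : (0:ℝ) ≤ 2⁻¹) (by norm_num : (0:ℝ) ≤ 2⁻¹)
        (by norm_num : (2⁻¹ : ℝ) + 2⁻¹ = 1)
      rw [smul_eq_mul, smul_eq_mul] at hco
      rw [← hdec] at hco
      exact hco
    have h1' : F (x + v) = s := by linarith
    have h2' : F (x - v) = s := by linarith
    have hd' : ∀ r : ℝ, 0 < r → 0 < volume (G ∩ ball x r) := by
      intro r hr
      have hsub : ball x (min r ε) ⊆ G ∩ ball x r := by
        intro y hy
        rw [mem_ball] at hy
        exact ⟨interior_subset (hball (mem_ball.2 (lt_of_lt_of_le hy (min_le_right _ _)))),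
          mem_ball.2 (lt_of_lt_of_le hy (min_le_left _ _))⟩
      exact lt_of_lt_of_le (measure_ball_pos volume x (lt_min hr hε)) (measure_mono hsub)
    have hstrict : 2 * F x < F (x + v) + F (x - v) :=
      F_strict_midpoint hK_conv habs hgauge_cont hc hC0.le hcg hC hG_meas hG_bdd
        hφm hφnn hφ_conv hφ_mono hvne hd'
    rw [hxeq, h1', h2'] at hstrict
    linarith
  -- the frontier of A is the level set
  have hfrA : frontier {x | F x < s} = {x | F x = s} := by
    rw [hA_open.frontier_eq, hcloA]
    ext x
    simp only [Set.mem_diff, Set.mem_setOf_eq]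
    constructor
    · rintro ⟨h1, h2⟩
      exact le_antisymm h1 (not_lt.1 h2)
    · intro h
      exact ⟨le_of_eq h, fun h2 => absurd h (ne_of_lt h2)⟩
  refine ⟨s, hspos, hA_int.trans interior_subset, hGclo, ?_, ?_⟩
  · refine Set.Subset.antisymm (fun z hz => ?_) (fun x hx => ?_)
    · rw [hfrA]
      exact hFconst z hz
    · have hx' : F x = s := by rw [hfrA] at hx; exact hx
      refine ⟨?_, fun hxint => ?_⟩
      · have : closure {x | F x < s} ⊆ closure G :=
          closure_mono (hA_int.trans interior_subset)
        exact this (frontier_subset_closure hx)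
      · have := hint_A hxint
        rw [Set.mem_setOf_eq, hx'] at this
        exact lt_irrefl s this
  · rw [hfrA]
    refine Set.Subset.antisymm (fun x hx => ⟨hx, hsubclo (le_of_eq hx)⟩) Set.inter_subset_left
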